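/- Let x be a sparse vector with support N = T ∪ Δ \ Δₑ where Δ is disjoint from T and Δₑ ⊆ T, with |T| = k, |Δ| = u. Let y = Ax. Define a_k(S,Š) := (θ_{Š,S} + θ_{Š,k}θ_{S,k}/(1-δ_k)) / (1 - δ_S - θ_{S,k}²/(1-δ_k)). If (1) δ_{k+u} < 1 and δ_{2u} + δ_k + θ_{k,2u}² < 1, and (2) a_k(2u,u) + a_k(u,u) < 1, then x is the unique minimizer of ‖β_{T^c}‖₁ subject to y = Aβ. -/

import Mathlib

open Matrix BigOperators Finset

noncomputable def cols {m n : ℕ} (A : Matrix (Fin m) (Fin n) ℝ) (T : Finset (Fin n)) :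
    Matrix (Fin m) {j // j ∈ T} ℝ :=
  Matrix.of fun i j => A i j.1

noncomputable def l2 {ι : Type*} [Fintype ι] (v : ι → ℝ) : ℝ :=
  Real.sqrt (∑ i, v i ^ 2)

def RIPBound {m n : ℕ} (A : Matrix (Fin m) (Fin n) ℝ) (S : ℕ) (δ : ℝ) : Prop :=
  ∀ T : Finset (Fin n), T.card ≤ S → ∀ c : {j // j ∈ T} → ℝ,
    (1 - δ) * (∑ j, c j ^ 2) ≤ (∑ i, ((cols A T).mulVec c i) ^ 2) ∧
    (∑ i, ((cols A T).mulVec c i) ^ 2) ≤ (1 + δ) * (∑ j, c j ^ 2)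

noncomputable def ripConst {m n : ℕ} (A : Matrix (Fin m) (Fin n) ℝ) (S : ℕ) : ℝ :=
  sInf {δ : ℝ | 0 ≤ δ ∧ RIPBound A S δ}

def ROCBound {m n : ℕ} (A : Matrix (Fin m) (Fin n) ℝ) (S₁ S₂ : ℕ) (θ : ℝ) : Prop :=
  ∀ T₁ T₂ : Finset (Fin n), Disjoint T₁ T₂ → T₁.card ≤ S₁ → T₂.card ≤ S₂ →
    ∀ c₁ : {j // j ∈ T₁} → ℝ, ∀ c₂ : {j // j ∈ T₂} → ℝ,
      |∑ i, (cols A T₁).mulVec c₁ i * (cols A T₂).mulVec c₂ i| ≤ θ * l2 c₁ * l2 c₂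

noncomputable def rocConst {m n : ℕ} (A : Matrix (Fin m) (Fin n) ℝ) (S₁ S₂ : ℕ) : ℝ :=
  sInf {θ : ℝ | 0 ≤ θ ∧ ROCBound A S₁ S₂ θ}

noncomputable def aConst {m n : ℕ} (A : Matrix (Fin m) (Fin n) ℝ) (k S S' : ℕ) : ℝ :=
  (rocConst A S' S + rocConst A S' k * rocConst A S k / (1 - ripConst A k)) /
    (1 - ripConst A S - (rocConst A S k) ^ 2 / (1 - ripConst A k))

noncomputable def projM {m n : ℕ} (A : Matrix (Fin m) (Fin n) ℝ) (T : Finset (Fin n)) :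
    Matrix (Fin m) (Fin m) ℝ :=
  1 - cols A T * ((cols A T)ᵀ * cols A T)⁻¹ * (cols A T)ᵀ

namespace MCS

variable {m n : ℕ}

/-- restrict a vector to a finset (zero outside). -/
noncomputable def mask (S : Finset (Fin n)) (v : Fin n → ℝ) : Fin n → ℝ :=
  fun j => if j ∈ S then v j else 0

noncomputable def q (A : Matrix (Fin m) (Fin n) ℝ) (v w : Fin n → ℝ) : ℝ :=
  ∑ i, A.mulVec v i * A.mulVec w i

lemma q_comm (A : Matrix (Fin m) (Fin n) ℝ) (v w : Fin n → ℝ) : q A v w = q A w v := by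
  unfold q; exact Finset.sum_congr rfl fun i _ => mul_comm _ _

lemma q_add_right (A : Matrix (Fin m) (Fin n) ℝ) (v w₁ w₂ : Fin n → ℝ) :
    q A v (w₁ + w₂) = q A v w₁ + q A v w₂ := by
  unfold q
  rw [← Finset.sum_add_distrib]
  refine Finset.sum_congr rfl fun i _ => ?_
  rw [Matrix.mulVec_add]; simp [mul_add]

lemma mask_union (S₁ S₂ : Finset (Fin n)) (hd : Disjoint S₁ S₂) (v : Fin n → ℝ) :
    mask (S₁ ∪ S₂) v = mask S₁ v + mask S₂ v := by
  funext j
  simp only [mask, Pi.add_apply, Finset.mem_union]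
  by_cases h1 : j ∈ S₁
  · have h2 : j ∉ S₂ := fun h2 => (Finset.disjoint_left.mp hd h1) h2
    simp [h1, h2]
  · by_cases h2 : j ∈ S₂ <;> simp [h1, h2]

lemma mask_compl_add (S : Finset (Fin n)) (v : Fin n → ℝ) :
    mask S v + mask Sᶜ v = v := by
  funext j
  by_cases h : j ∈ S <;> simp [mask, h]

/-- bridge: cols-mulVec of the restricted coefficient vector equals mulVec of the mask. -/
lemma cols_mulVec_eq (A : Matrix (Fin m) (Fin n) ℝ) (S : Finset (Fin n)) (v : Fin n → ℝ) :
    (cols A S).mulVec (fun j => v j.1) = A.mulVec (mask S v) := by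
  funext i
  unfold Matrix.mulVec dotProduct cols mask
  simp only [Matrix.of_apply]
  rw [Finset.sum_coe_sort S (fun j => A i j * v j)]
  simp [mul_ite, Finset.sum_ite_mem]

lemma sum_sq_coe (S : Finset (Fin n)) (v : Fin n → ℝ) :
    (∑ j : {j // j ∈ S}, (v j.1) ^ 2) = ∑ j ∈ S, v j ^ 2 :=
  Finset.sum_coe_sort S (fun j => v j ^ 2)


lemma colsq_le (A : Matrix (Fin m) (Fin n) ℝ) (T : Finset (Fin n)) (c : {j // j ∈ T} → ℝ) :
    (∑ i, ((cols A T).mulVec c i) ^ 2) ≤ (∑ i, ∑ j, (A i j)^2) * ∑ j, c j ^ 2 := by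
  have step : ∀ i, ((cols A T).mulVec c i) ^ 2 ≤ (∑ j : {j // j ∈ T}, (A i j.1)^2) * ∑ j, c j ^ 2 := by
    intro i
    have h := Finset.sum_mul_sq_le_sq_mul_sq Finset.univ (fun j : {j // j ∈ T} => A i j.1) c
    simpa [Matrix.mulVec, dotProduct, cols] using h
  calc (∑ i, ((cols A T).mulVec c i) ^ 2)
      ≤ ∑ i, (∑ j : {j // j ∈ T}, (A i j.1)^2) * ∑ j, c j ^ 2 :=
        Finset.sum_le_sum fun i _ => step i
    _ = (∑ i, ∑ j : {j // j ∈ T}, (A i j.1)^2) * ∑ j, c j ^ 2 := by rw [Finset.sum_mul]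
    _ ≤ (∑ i, ∑ j, (A i j)^2) * ∑ j, c j ^ 2 := by
        have hc : (0:ℝ) ≤ ∑ j, c j ^ 2 := by positivity
        refine mul_le_mul_of_nonneg_right (Finset.sum_le_sum fun i _ => ?_) hc
        rw [Finset.sum_coe_sort T (fun j => (A i j)^2)]
        exact Finset.sum_le_sum_of_subset_of_nonneg (Finset.subset_univ T)
          (fun j _ _ => by positivity)

lemma ripSet_nonempty (A : Matrix (Fin m) (Fin n) ℝ) (S : ℕ) :
    {δ : ℝ | 0 ≤ δ ∧ RIPBound A S δ}.Nonempty := by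
  refine ⟨1 + ∑ i, ∑ j, (A i j)^2, by positivity, ?_⟩
  intro T hT c
  have hc : (0:ℝ) ≤ ∑ j, c j ^ 2 := by positivity
  have hq : (0:ℝ) ≤ ∑ i, ((cols A T).mulVec c i) ^ 2 := by positivity
  have hK : (0:ℝ) ≤ ∑ i, ∑ j, (A i j)^2 := by positivity
  constructor
  · nlinarith [mul_nonneg hK hc]
  · have := colsq_le A T c
    nlinarith

lemma rocSet_nonempty (A : Matrix (Fin m) (Fin n) ℝ) (S₁ S₂ : ℕ) :
    {θ : ℝ | 0 ≤ θ ∧ ROCBound A S₁ S₂ θ}.Nonempty := by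
  refine ⟨∑ i, ∑ j, (A i j)^2, by positivity, ?_⟩
  intro T₁ T₂ _ _ _ c₁ c₂
  set K := ∑ i, ∑ j, (A i j)^2 with hKdef
  have hK : (0:ℝ) ≤ K := by positivity
  have h1 := colsq_le A T₁ c₁
  have h2 := colsq_le A T₂ c₂
  have cs := Finset.sum_mul_sq_le_sq_mul_sq Finset.univ
    (fun i => (cols A T₁).mulVec c₁ i) (fun i => (cols A T₂).mulVec c₂ i)
  have habs : |∑ i, (cols A T₁).mulVec c₁ i * (cols A T₂).mulVec c₂ i| ≤
      Real.sqrt ((∑ i, ((cols A T₁).mulVec c₁ i)^2) * (∑ i, ((cols A T₂).mulVec c₂ i)^2)) := by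
    rw [← Real.sqrt_sq_eq_abs]
    exact Real.sqrt_le_sqrt cs
  refine habs.trans ?_
  have step : Real.sqrt ((∑ i, ((cols A T₁).mulVec c₁ i)^2) * (∑ i, ((cols A T₂).mulVec c₂ i)^2)) ≤
      Real.sqrt ((K * ∑ j, c₁ j ^ 2) * (K * ∑ j, c₂ j ^ 2)) := by
    apply Real.sqrt_le_sqrt
    have hq2 : (0:ℝ) ≤ ∑ i, ((cols A T₂).mulVec c₂ i)^2 := by positivity
    exact mul_le_mul h1 h2 hq2 (by positivity)
  refine step.trans (le_of_eq ?_)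
  rw [Real.sqrt_mul (by positivity : (0:ℝ) ≤ K * ∑ j, c₁ j ^ 2),
    Real.sqrt_mul hK, Real.sqrt_mul hK]
  unfold l2
  have hKK : Real.sqrt K * Real.sqrt K = K := Real.mul_self_sqrt hK
  linear_combination Real.sqrt (∑ j, c₁ j ^ 2) * Real.sqrt (∑ j, c₂ j ^ 2) * hKK

lemma ripConst_nonneg (A : Matrix (Fin m) (Fin n) ℝ) (S : ℕ) : 0 ≤ ripConst A S :=
  le_csInf (ripSet_nonempty A S) fun _ h => h.1

lemma rocConst_nonneg (A : Matrix (Fin m) (Fin n) ℝ) (S₁ S₂ : ℕ) : 0 ≤ rocConst A S₁ S₂ :=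
  le_csInf (rocSet_nonempty A S₁ S₂) fun _ h => h.1

lemma ripBound_ripConst (A : Matrix (Fin m) (Fin n) ℝ) (S : ℕ) :
    RIPBound A S (ripConst A S) := by
  intro T hT c
  have hc : (0:ℝ) ≤ ∑ j, c j ^ 2 := by positivity
  have hQ0 : (0:ℝ) ≤ ∑ i, ((cols A T).mulVec c i) ^ 2 := by positivity
  have hrip : ripConst A S = sInf {δ : ℝ | 0 ≤ δ ∧ RIPBound A S δ} := rfl
  have key : ∀ ε > (0:ℝ),
      (1 - (ripConst A S + ε)) * (∑ j, c j ^ 2) ≤ (∑ i, ((cols A T).mulVec c i) ^ 2) ∧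
      (∑ i, ((cols A T).mulVec c i) ^ 2) ≤ (1 + (ripConst A S + ε)) * (∑ j, c j ^ 2) := by
    intro ε hε
    obtain ⟨δ, hδm, hδlt⟩ := Real.lt_sInf_add_pos (ripSet_nonempty A S) hε
    rw [← hrip] at hδlt
    have h := hδm.2 T hT c
    constructor
    · calc (1 - (ripConst A S + ε)) * (∑ j, c j ^ 2) ≤ (1 - δ) * (∑ j, c j ^ 2) :=
            mul_le_mul_of_nonneg_right (by linarith) hc
        _ ≤ _ := h.1
    · calc (∑ i, ((cols A T).mulVec c i) ^ 2) ≤ (1 + δ) * (∑ j, c j ^ 2) := h.2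
        _ ≤ (1 + (ripConst A S + ε)) * (∑ j, c j ^ 2) :=
            mul_le_mul_of_nonneg_right (by linarith) hc
  rcases eq_or_lt_of_le hc with hs0 | hs0
  · obtain ⟨δ, hδm⟩ := ripSet_nonempty A S
    have h := (hδm.2 T hT c).2
    rw [← hs0, mul_zero] at h
    constructor
    · rw [← hs0, mul_zero]; exact hQ0
    · rw [← hs0, mul_zero]; exact h
  · constructor
    · have h : ∀ ε > (0:ℝ), (1 - ripConst A S) * (∑ j, c j ^ 2) ≤
          (∑ i, ((cols A T).mulVec c i) ^ 2) + ε := by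
        intro ε hε
        have h := (key (ε / (∑ j, c j ^ 2)) (by positivity)).1
        have heq : (1 - (ripConst A S + ε / (∑ j, c j ^ 2))) * (∑ j, c j ^ 2) =
            (1 - ripConst A S) * (∑ j, c j ^ 2) - ε := by
          have hss : (ε / (∑ j, c j ^ 2)) * (∑ j, c j ^ 2) = ε :=
            div_mul_cancel₀ _ (ne_of_gt hs0)
          linear_combination -hss
        linarith
      linarith [le_of_forall_pos_le_add h]
    · have h : ∀ ε > (0:ℝ), (∑ i, ((cols A T).mulVec c i) ^ 2) ≤
          (1 + ripConst A S) * (∑ j, c j ^ 2) + ε := by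
        intro ε hε
        have h := (key (ε / (∑ j, c j ^ 2)) (by positivity)).2
        have heq : (1 + (ripConst A S + ε / (∑ j, c j ^ 2))) * (∑ j, c j ^ 2) =
            (1 + ripConst A S) * (∑ j, c j ^ 2) + ε := by
          have hss : (ε / (∑ j, c j ^ 2)) * (∑ j, c j ^ 2) = ε :=
            div_mul_cancel₀ _ (ne_of_gt hs0)
          linear_combination hss
        linarith
      exact le_of_forall_pos_le_add h

lemma rocBound_rocConst (A : Matrix (Fin m) (Fin n) ℝ) (S₁ S₂ : ℕ) :
    ROCBound A S₁ S₂ (rocConst A S₁ S₂) := by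
  intro T₁ T₂ hdis h1 h2 c₁ c₂
  have hl1 : 0 ≤ l2 c₁ := Real.sqrt_nonneg _
  have hl2 : 0 ≤ l2 c₂ := Real.sqrt_nonneg _
  have hroc : rocConst A S₁ S₂ = sInf {θ : ℝ | 0 ≤ θ ∧ ROCBound A S₁ S₂ θ} := rfl
  have key : ∀ ε > (0:ℝ), |∑ i, (cols A T₁).mulVec c₁ i * (cols A T₂).mulVec c₂ i| ≤
      (rocConst A S₁ S₂ + ε) * l2 c₁ * l2 c₂ := by
    intro ε hε
    obtain ⟨θ, hθm, hθlt⟩ := Real.lt_sInf_add_pos (rocSet_nonempty A S₁ S₂) hε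
    rw [← hroc] at hθlt
    have h := hθm.2 T₁ T₂ hdis h1 h2 c₁ c₂
    calc |∑ i, (cols A T₁).mulVec c₁ i * (cols A T₂).mulVec c₂ i| ≤ θ * l2 c₁ * l2 c₂ := h
      _ ≤ (rocConst A S₁ S₂ + ε) * l2 c₁ * l2 c₂ := by
          have hll : (0:ℝ) ≤ l2 c₁ * l2 c₂ := mul_nonneg hl1 hl2
          nlinarith
  rcases eq_or_lt_of_le (mul_nonneg hl1 hl2) with h0 | h0
  · obtain ⟨θ, hθm⟩ := rocSet_nonempty A S₁ S₂
    have h := hθm.2 T₁ T₂ hdis h1 h2 c₁ c₂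
    have e1 : θ * l2 c₁ * l2 c₂ = 0 := by rw [mul_assoc, ← h0, mul_zero]
    have e2 : rocConst A S₁ S₂ * l2 c₁ * l2 c₂ = 0 := by rw [mul_assoc, ← h0, mul_zero]
    linarith
  · apply le_of_forall_pos_le_add
    intro ε hε
    have h := key (ε / (l2 c₁ * l2 c₂)) (by positivity)
    have heq : (rocConst A S₁ S₂ + ε / (l2 c₁ * l2 c₂)) * l2 c₁ * l2 c₂ =
        rocConst A S₁ S₂ * l2 c₁ * l2 c₂ + ε := by
      have hss : (ε / (l2 c₁ * l2 c₂)) * (l2 c₁ * l2 c₂) = ε :=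
        div_mul_cancel₀ _ (ne_of_gt h0)
      linear_combination hss
    linarith


lemma rocConst_symm (A : Matrix (Fin m) (Fin n) ℝ) (S₁ S₂ : ℕ) :
    rocConst A S₁ S₂ = rocConst A S₂ S₁ := by
  have hiff : ∀ S₁ S₂ θ, ROCBound A S₁ S₂ θ → ROCBound A S₂ S₁ θ := by
    intro S₁ S₂ θ h T₁ T₂ hdis h1 h2 c₁ c₂
    have := h T₂ T₁ hdis.symm h2 h1 c₂ c₁
    calc |∑ i, (cols A T₁).mulVec c₁ i * (cols A T₂).mulVec c₂ i|
        = |∑ i, (cols A T₂).mulVec c₂ i * (cols A T₁).mulVec c₁ i| := by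
          congr 1; exact Finset.sum_congr rfl fun i _ => mul_comm _ _
      _ ≤ θ * l2 c₂ * l2 c₁ := this
      _ = θ * l2 c₁ * l2 c₂ := by ring
  unfold rocConst
  congr 1
  ext θ
  exact ⟨fun h => ⟨h.1, hiff _ _ _ h.2⟩, fun h => ⟨h.1, hiff _ _ _ h.2⟩⟩

lemma ripConst_mono (A : Matrix (Fin m) (Fin n) ℝ) {S₁ S₂ : ℕ} (h : S₁ ≤ S₂) :
    ripConst A S₁ ≤ ripConst A S₂ := by
  apply csInf_le_csInf ⟨0, fun δ hδ => hδ.1⟩ (ripSet_nonempty A S₂)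
  intro δ hδ
  exact ⟨hδ.1, fun T hT c => hδ.2 T (hT.trans h) c⟩

lemma rocConst_mono_left (A : Matrix (Fin m) (Fin n) ℝ) {S₁ S₁' S₂ : ℕ} (h : S₁ ≤ S₁') :
    rocConst A S₁ S₂ ≤ rocConst A S₁' S₂ := by
  apply csInf_le_csInf ⟨0, fun θ hθ => hθ.1⟩ (rocSet_nonempty A S₁' S₂)
  intro θ hθ
  exact ⟨hθ.1, fun T₁ T₂ hdis h1 h2 c₁ c₂ => hθ.2 T₁ T₂ hdis (h1.trans h) h2 c₁ c₂⟩

lemma rip_lower (A : Matrix (Fin m) (Fin n) ℝ) {N : ℕ} (S : Finset (Fin n))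
    (hS : S.card ≤ N) (v : Fin n → ℝ) :
    (1 - ripConst A N) * (∑ j ∈ S, v j ^ 2) ≤ q A (mask S v) (mask S v) := by
  have h := (ripBound_ripConst A N S hS (fun j => v j.1)).1
  rw [cols_mulVec_eq, sum_sq_coe] at h
  unfold q
  calc (1 - ripConst A N) * (∑ j ∈ S, v j ^ 2) ≤ ∑ i, (A.mulVec (mask S v) i) ^ 2 := h
    _ = ∑ i, A.mulVec (mask S v) i * A.mulVec (mask S v) i :=
      Finset.sum_congr rfl fun i _ => sq (A.mulVec (mask S v) i) ▸ by ring

lemma roc_apply (A : Matrix (Fin m) (Fin n) ℝ) {N₁ N₂ : ℕ} (S₁ S₂ : Finset (Fin n))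
    (hdis : Disjoint S₁ S₂) (h1 : S₁.card ≤ N₁) (h2 : S₂.card ≤ N₂) (v w : Fin n → ℝ) :
    |q A (mask S₁ v) (mask S₂ w)| ≤
      rocConst A N₁ N₂ * Real.sqrt (∑ j ∈ S₁, v j ^ 2) * Real.sqrt (∑ j ∈ S₂, w j ^ 2) := by
  have h := rocBound_rocConst A N₁ N₂ S₁ S₂ hdis h1 h2 (fun j => v j.1) (fun j => w j.1)
  rw [cols_mulVec_eq, cols_mulVec_eq] at h
  unfold l2 at h
  rw [sum_sq_coe, sum_sq_coe] at h
  exact h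


lemma q_add_left (A : Matrix (Fin m) (Fin n) ℝ) (v₁ v₂ w : Fin n → ℝ) :
    q A (v₁ + v₂) w = q A v₁ w + q A v₂ w := by
  rw [q_comm, q_add_right, q_comm A w v₁, q_comm A w v₂]

lemma mask_empty (v : Fin n → ℝ) : mask (∅ : Finset (Fin n)) v = 0 := by
  funext j; simp [mask]

lemma q_zero_left (A : Matrix (Fin m) (Fin n) ℝ) (w : Fin n → ℝ) : q A 0 w = 0 := by
  unfold q
  rw [Matrix.mulVec_zero]
  simp

lemma exists_top (E : Finset (Fin n)) (f : Fin n → ℝ) (u : ℕ) (hu : u ≤ E.card) :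
    ∃ B, B ⊆ E ∧ B.card = u ∧ ∀ i ∈ E \ B, ∀ j ∈ B, f i ≤ f j := by
  have hne : (E.powersetCard u).Nonempty := by
    obtain ⟨t, ht, hc⟩ := Finset.exists_subset_card_eq hu
    exact ⟨t, Finset.mem_powersetCard.mpr ⟨ht, hc⟩⟩
  obtain ⟨B, hBmem, hBmax⟩ := Finset.exists_max_image (E.powersetCard u)
    (fun B => ∑ j ∈ B, f j) hne
  obtain ⟨hBE, hBcard⟩ := Finset.mem_powersetCard.mp hBmem
  refine ⟨B, hBE, hBcard, ?_⟩
  intro i hi j hj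
  by_contra hlt
  push_neg at hlt
  have hiE := (Finset.mem_sdiff.mp hi).1
  have hiB := (Finset.mem_sdiff.mp hi).2
  have hiB' : i ∉ B.erase j := fun hmem => hiB (Finset.mem_of_mem_erase hmem)
  have hB'E : insert i (B.erase j) ⊆ E := by
    intro a ha
    rcases Finset.mem_insert.mp ha with rfl | hmem
    · exact hiE
    · exact hBE (Finset.mem_of_mem_erase hmem)
  have hupos : 0 < u := hBcard ▸ Finset.card_pos.mpr ⟨j, hj⟩
  have hcard : (insert i (B.erase j)).card = u := by
    rw [Finset.card_insert_of_notMem hiB', Finset.card_erase_of_mem hj, hBcard]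
    omega
  have hsum : ∑ x ∈ B, f x < ∑ x ∈ insert i (B.erase j), f x := by
    rw [Finset.sum_insert hiB']
    have herase := Finset.add_sum_erase B f hj
    linarith
  have := hBmax (insert i (B.erase j)) (Finset.mem_powersetCard.mpr ⟨hB'E, hcard⟩)
  linarith

lemma key (A : Matrix (Fin m) (Fin n) ℝ) {u : ℕ} (hu : 0 < u) (h : Fin n → ℝ) :
    ∀ (c : ℕ) (E : Finset (Fin n)), E.card ≤ c →
    ∃ B, B ⊆ E ∧ B.card ≤ u ∧ ∀ (M : ℕ) (S : Finset (Fin n)) (v : Fin n → ℝ),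
      Disjoint S (E \ B) → S.card ≤ M →
      |q A (mask (E \ B) h) (mask S v)| ≤
        rocConst A u M * ((∑ j ∈ E, |h j|) / Real.sqrt u) * Real.sqrt (∑ j ∈ S, v j ^ 2) := by
  have base : ∀ E : Finset (Fin n), E.card ≤ u →
      ∃ B, B ⊆ E ∧ B.card ≤ u ∧ ∀ (M : ℕ) (S : Finset (Fin n)) (v : Fin n → ℝ),
      Disjoint S (E \ B) → S.card ≤ M →
      |q A (mask (E \ B) h) (mask S v)| ≤
        rocConst A u M * ((∑ j ∈ E, |h j|) / Real.sqrt u) * Real.sqrt (∑ j ∈ S, v j ^ 2) := by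
    intro E hEu
    refine ⟨E, Finset.Subset.refl E, hEu, ?_⟩
    intro M S v _ _
    rw [Finset.sdiff_self, mask_empty, q_zero_left, abs_zero]
    have h1 : (0:ℝ) ≤ rocConst A u M := rocConst_nonneg A u M
    have h2 : (0:ℝ) ≤ (∑ j ∈ E, |h j|) / Real.sqrt u := by positivity
    positivity
  intro c
  induction c with
  | zero =>
    intro E hE
    exact base E (le_trans hE (Nat.zero_le u))
  | succ c ih =>
    intro E hE
    by_cases hEu : E.card ≤ u
    · exact base E hEu
    · push_neg at hEu
      obtain ⟨B, hBE, hBcard, htop⟩ := exists_top E (fun j => |h j|) u (le_of_lt hEu)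
      have hE' : (E \ B).card ≤ c := by
        rw [Finset.card_sdiff_of_subset hBE, hBcard]
        omega
      obtain ⟨B', hB'sub, hB'card, hbound⟩ := ih (E \ B) hE'
      refine ⟨B, hBE, le_of_eq hBcard, ?_⟩
      intro M S v hdisj hSM
      have hsplit : mask (E \ B) h = mask B' h + mask ((E \ B) \ B') h := by
        rw [← mask_union B' ((E \ B) \ B') Finset.disjoint_sdiff h,
          Finset.union_sdiff_of_subset hB'sub]
      rw [hsplit, q_add_left]
      have hroc : (0:ℝ) ≤ rocConst A u M := rocConst_nonneg A u M
      have hsv : (0:ℝ) ≤ Real.sqrt (∑ j ∈ S, v j ^ 2) := Real.sqrt_nonneg _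
      -- bound on the first block
      have hdisjB' : Disjoint B' S :=
        (Finset.disjoint_of_subset_right (hB'sub.trans (Finset.Subset.refl _)) hdisj).symm
      have t1 := roc_apply A B' S hdisjB' hB'card hSM h v
      have hBsum : (0:ℝ) ≤ ∑ j ∈ B, |h j| := Finset.sum_nonneg fun j _ => abs_nonneg _
      have hfirst : Real.sqrt (∑ j ∈ B', h j ^ 2) ≤ (∑ j ∈ B, |h j|) / Real.sqrt u := by
        have hbnd : ∀ i ∈ B', h i ^ 2 ≤ ((∑ j ∈ B, |h j|) / u) ^ 2 := by
          intro i hiB'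
          have hiEB : i ∈ E \ B := hB'sub hiB'
          have hle : |h i| ≤ (∑ j ∈ B, |h j|) / u := by
            rw [le_div_iff₀ (by exact_mod_cast hu)]
            have : (u:ℝ) * |h i| = ∑ _j ∈ B, |h i| := by
              rw [Finset.sum_const, hBcard, nsmul_eq_mul]
            rw [mul_comm, this]
            exact Finset.sum_le_sum fun j hj => htop i hiEB j hj
          calc h i ^ 2 = |h i| ^ 2 := (sq_abs _).symm
            _ ≤ ((∑ j ∈ B, |h j|) / u) ^ 2 := by
                have h0 : (0:ℝ) ≤ |h i| := abs_nonneg _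
                nlinarith
        have hsum2 : ∑ j ∈ B', h j ^ 2 ≤ (∑ j ∈ B, |h j|) ^ 2 / u := by
          calc ∑ j ∈ B', h j ^ 2 ≤ ∑ _j ∈ B', ((∑ j ∈ B, |h j|) / u) ^ 2 :=
              Finset.sum_le_sum hbnd
            _ = B'.card * ((∑ j ∈ B, |h j|) / u) ^ 2 := by
                rw [Finset.sum_const, nsmul_eq_mul]
            _ ≤ u * ((∑ j ∈ B, |h j|) / u) ^ 2 := by
                have : (B'.card : ℝ) ≤ u := by exact_mod_cast hB'card
                nlinarith [sq_nonneg ((∑ j ∈ B, |h j|) / u)]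
            _ = (∑ j ∈ B, |h j|) ^ 2 / u := by
                field_simp
        calc Real.sqrt (∑ j ∈ B', h j ^ 2) ≤ Real.sqrt ((∑ j ∈ B, |h j|) ^ 2 / u) :=
            Real.sqrt_le_sqrt hsum2
          _ = (∑ j ∈ B, |h j|) / Real.sqrt u := by
              rw [Real.sqrt_div (sq_nonneg _), Real.sqrt_sq hBsum]
      have t1' : |q A (mask B' h) (mask S v)| ≤
          rocConst A u M * ((∑ j ∈ B, |h j|) / Real.sqrt u) * Real.sqrt (∑ j ∈ S, v j ^ 2) :=
        t1.trans (mul_le_mul_of_nonneg_right (mul_le_mul_of_nonneg_left hfirst hroc) hsv)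
      have t2 := hbound M S v (Finset.disjoint_of_subset_right Finset.sdiff_subset hdisj) hSM
      have hsum3 : (∑ j ∈ B, |h j|) + (∑ j ∈ E \ B, |h j|) = ∑ j ∈ E, |h j| := by
        rw [add_comm]
        exact Finset.sum_sdiff hBE
      calc |q A (mask B' h) (mask S v) + q A (mask ((E \ B) \ B') h) (mask S v)|
          ≤ |q A (mask B' h) (mask S v)| + |q A (mask ((E \ B) \ B') h) (mask S v)| :=
            abs_add_le _ _
        _ ≤ rocConst A u M * ((∑ j ∈ B, |h j|) / Real.sqrt u) * Real.sqrt (∑ j ∈ S, v j ^ 2) +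
            rocConst A u M * ((∑ j ∈ E \ B, |h j|) / Real.sqrt u) *
              Real.sqrt (∑ j ∈ S, v j ^ 2) := add_le_add t1' t2
        _ = rocConst A u M * (((∑ j ∈ B, |h j|) + (∑ j ∈ E \ B, |h j|)) / Real.sqrt u) *
            Real.sqrt (∑ j ∈ S, v j ^ 2) := by ring
        _ = _ := by rw [hsum3]
end MCS

open MCS in
theorem stmt10 {m n k u : ℕ} (A : Matrix (Fin m) (Fin n) ℝ)
    (T Δ Δₑ : Finset (Fin n)) (x : Fin n → ℝ)
    (hd : Disjoint T Δ) (he : Δₑ ⊆ T)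
    (hT : T.card = k) (hu : Δ.card = u)
    (hsupp : Function.support x = ↑((T ∪ Δ) \ Δₑ))
    (hc1a : ripConst A (k + u) < 1)
    (hc1b : ripConst A (2 * u) + ripConst A k + rocConst A k (2 * u) ^ 2 < 1)
    (hc2 : aConst A k (2 * u) u + aConst A k u u < 1) :
    ∀ β : Fin n → ℝ, A.mulVec β = A.mulVec x → β ≠ x →
      (∑ j ∈ Tᶜ, |x j|) < ∑ j ∈ Tᶜ, |β j| := by
  intro β hAβ hβne
  by_contra hcon
  push_neg at hcon
  set z : Fin n → ℝ := β - x with hz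
  have hzj : ∀ j, z j = β j - x j := fun j => rfl
  have hker : A.mulVec z = 0 := by
    rw [hz, Matrix.mulVec_sub, hAβ, sub_self]
  -- support facts
  have hxE : ∀ j, j ∉ T → j ∉ Δ → x j = 0 := by
    intro j hjT hjΔ
    by_contra hx0
    have hmem : j ∈ Function.support x := Function.mem_support.mpr hx0
    rw [hsupp] at hmem
    have : j ∈ (T ∪ Δ) \ Δₑ := Finset.mem_coe.mp hmem
    rcases Finset.mem_union.mp (Finset.mem_sdiff.mp this).1 with hmem2 | hmem2
    · exact hjT hmem2
    · exact hjΔ hmem2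
  set E : Finset (Fin n) := Tᶜ \ Δ with hE
  have hEsub : E ⊆ Tᶜ := Finset.sdiff_subset
  have hΔTc : Δ ⊆ Tᶜ := fun j hj => Finset.mem_compl.mpr (Finset.disjoint_right.mp hd hj)
  have hTc_eq : Δ ∪ E = Tᶜ := Finset.union_sdiff_of_subset hΔTc
  have hdisjΔE : Disjoint Δ E := Finset.disjoint_sdiff
  have hEx : ∀ j ∈ E, x j = 0 := by
    intro j hj
    exact hxE j (Finset.mem_compl.mp (hEsub hj)) (Finset.mem_sdiff.mp hj).2
  -- cone constraint
  have hconeE : ∑ j ∈ E, |z j| ≤ ∑ j ∈ Δ, |z j| := by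
    have e1 : ∑ j ∈ Tᶜ, |β j| = ∑ j ∈ Δ, |β j| + ∑ j ∈ E, |β j| := by
      rw [← hTc_eq, Finset.sum_union hdisjΔE]
    have e2 : ∑ j ∈ Tᶜ, |x j| = ∑ j ∈ Δ, |x j| + ∑ j ∈ E, |x j| := by
      rw [← hTc_eq, Finset.sum_union hdisjΔE]
    have e3 : ∑ j ∈ E, |x j| = 0 := Finset.sum_eq_zero fun j hj => by rw [hEx j hj, abs_zero]
    have e4 : ∑ j ∈ E, |β j| = ∑ j ∈ E, |z j| := by
      refine Finset.sum_congr rfl fun j hj => ?_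
      rw [hzj j, hEx j hj, sub_zero]
    have e5 : ∑ j ∈ Δ, |x j| ≤ ∑ j ∈ Δ, |β j| + ∑ j ∈ Δ, |z j| := by
      rw [← Finset.sum_add_distrib]
      refine Finset.sum_le_sum fun j _ => ?_
      have : x j = β j - z j := by rw [hzj j]; ring
      rw [this]
      exact abs_sub _ _
    linarith
  -- shared endgame: if z vanishes on Tᶜ we contradict β ≠ x
  have hfinal : (∀ j ∈ Tᶜ, z j = 0) → False := by
    intro hzTc
    have hmaskT : mask T z = z := by
      funext j
      by_cases hj : j ∈ T
      · simp [mask, hj]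
      · simp [mask, hj, hzTc j (Finset.mem_compl.mpr hj)]
    have hq0 : q A z z = 0 := by
      unfold q
      rw [hker]
      simp
    have hlow := rip_lower A (N := k + u) T (by omega) z
    rw [hmaskT, hq0] at hlow
    have hTz : ∑ j ∈ T, z j ^ 2 = 0 := by
      have hnn : (0:ℝ) ≤ ∑ j ∈ T, z j ^ 2 := by positivity
      nlinarith
    have hzT : ∀ j ∈ T, z j = 0 := by
      intro j hj
      have := (Finset.sum_eq_zero_iff_of_nonneg fun i _ => sq_nonneg (z i)).mp hTz j hj
      exact pow_eq_zero_iff two_ne_zero |>.mp this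
    apply hβne
    funext j
    have : z j = 0 := by
      by_cases hj : j ∈ T
      · exact hzT j hj
      · exact hzTc j (Finset.mem_compl.mpr hj)
    have := hzj j ▸ this
    linarith
  by_cases hu0 : u = 0
  · -- u = 0 : Δ is empty, cone forces z = 0 on Tᶜ
    have hΔ : Δ = ∅ := Finset.card_eq_zero.mp (by rw [hu, hu0])
    have hsum0 : ∑ j ∈ E, |z j| ≤ 0 := by
      rw [hΔ] at hconeE
      simpa using hconeE
    apply hfinal
    intro j hj
    have hj' : j ∈ E := by
      rw [hE, hΔ]
      simpa using hj
    have : ∀ i ∈ E, |z i| = 0 := by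
      intro i hi
      have hnn : ∀ i ∈ E, (0:ℝ) ≤ |z i| := fun i _ => abs_nonneg _
      have := Finset.sum_eq_zero_iff_of_nonneg hnn |>.mp (le_antisymm hsum0 (Finset.sum_nonneg hnn))
      exact this i hi
    exact abs_eq_zero.mp (this j hj')
  · have hupos : 0 < u := Nat.pos_of_ne_zero hu0
    have hEcard : E.card ≤ n := le_trans (Finset.card_le_univ E) (by simp)
    obtain ⟨B, hBE, hBcard, hbound⟩ := key A hupos z n E hEcard
    have hBTc : B ⊆ Tᶜ := hBE.trans hEsub
    have hdisjΔB : Disjoint Δ B :=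
      Finset.disjoint_right.mpr fun j hj => (Finset.mem_sdiff.mp (hBE hj)).2
    have hcardΔB : (Δ ∪ B).card ≤ 2 * u := by
      have := Finset.card_union_le Δ B
      omega
    have hdisjΔB_T : Disjoint (Δ ∪ B) T := by
      rw [Finset.disjoint_union_left]
      exact ⟨hd.symm, Finset.disjoint_left.mpr fun j hj => Finset.mem_compl.mp (hBTc hj)⟩
    have hdisjΔB_EB : Disjoint (Δ ∪ B) (E \ B) := by
      rw [Finset.disjoint_union_left]
      exact ⟨Finset.disjoint_of_subset_right Finset.sdiff_subset hdisjΔE,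
        Finset.disjoint_sdiff⟩
    have hdisjT_EB : Disjoint T (E \ B) :=
      Finset.disjoint_of_subset_right (Finset.sdiff_subset.trans hEsub)
        disjoint_compl_right
    -- decomposition of z
    have h2' : mask Tᶜ z = mask Δ z + mask E z := by
      rw [← hTc_eq, mask_union Δ E hdisjΔE]
    have h3' : mask E z = mask B z + mask (E \ B) z := by
      conv_lhs => rw [← Finset.union_sdiff_of_subset hBE]
      rw [mask_union B (E \ B) Finset.disjoint_sdiff]
    have h4' : mask (Δ ∪ B) z = mask Δ z + mask B z := mask_union Δ B hdisjΔB z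
    have hdecomp : z = mask T z + (mask (Δ ∪ B) z + mask (E \ B) z) := by
      calc z = mask T z + mask Tᶜ z := (mask_compl_add T z).symm
        _ = mask T z + (mask Δ z + (mask B z + mask (E \ B) z)) := by rw [h2', h3']
        _ = mask T z + (mask (Δ ∪ B) z + mask (E \ B) z) := by
            rw [h4', add_assoc]
    -- abbreviations
    rw [rocConst_symm A k (2 * u)] at hc1b
    set dk := ripConst A k with hdkdef
    set d2 := ripConst A (2 * u) with hd2def
    set θ₀ := rocConst A u (2 * u) with hθ₀def
    set θ₁ := rocConst A u k with hθ₁def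
    set θ₂ := rocConst A (2 * u) k with hθ₂def
    have hdknn : 0 ≤ dk := ripConst_nonneg A k
    have hd2nn : 0 ≤ d2 := ripConst_nonneg A (2 * u)
    have hθ₀nn : 0 ≤ θ₀ := rocConst_nonneg A u (2 * u)
    have hθ₁nn : 0 ≤ θ₁ := rocConst_nonneg A u k
    have hθ₂nn : 0 ≤ θ₂ := rocConst_nonneg A (2 * u) k
    have hdk1 : dk < 1 := by nlinarith [sq_nonneg θ₂]
    have h1k : 0 < 1 - dk := by linarith
    set s := Real.sqrt (∑ j ∈ Δ ∪ B, z j ^ 2) with hsdef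
    set t := Real.sqrt (∑ j ∈ T, z j ^ 2) with htdef
    set sE := (∑ j ∈ E, |z j|) / Real.sqrt u with hsEdef
    have hs0 : 0 ≤ s := Real.sqrt_nonneg _
    have ht0 : 0 ≤ t := Real.sqrt_nonneg _
    have hsE0 : 0 ≤ sE := by
      rw [hsEdef]
      positivity
    have hs2 : s ^ 2 = ∑ j ∈ Δ ∪ B, z j ^ 2 := Real.sq_sqrt (by positivity)
    have ht2 : t ^ 2 = ∑ j ∈ T, z j ^ 2 := Real.sq_sqrt (by positivity)
    -- q identities
    have hqz : ∀ v : Fin n → ℝ, q A v z = 0 := by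
      intro v
      unfold MCS.q
      rw [hker]
      simp
    have hexpand : ∀ v : Fin n → ℝ, (0:ℝ) =
        q A v (mask T z) + (q A v (mask (Δ ∪ B) z) + q A v (mask (E \ B) z)) := by
      intro v
      rw [← q_add_right, ← q_add_right, ← hdecomp]
      exact (hqz v).symm
    have hq_g : q A (mask (Δ ∪ B) z) (mask (Δ ∪ B) z) =
        -(q A (mask (Δ ∪ B) z) (mask T z)) - q A (mask (Δ ∪ B) z) (mask (E \ B) z) := by
      have hexp := hexpand (mask (Δ ∪ B) z)
      linarith
    have hq_w : q A (mask T z) (mask T z) =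
        -(q A (mask T z) (mask (Δ ∪ B) z)) - q A (mask T z) (mask (E \ B) z) := by
      have hexp := hexpand (mask T z)
      linarith
    -- bounds
    have bound1 : |q A (mask (Δ ∪ B) z) (mask T z)| ≤ θ₂ * s * t := by
      rw [hθ₂def, hsdef, htdef]
      exact roc_apply A (Δ ∪ B) T hdisjΔB_T hcardΔB hT.le z z
    have bound2 : |q A (mask (E \ B) z) (mask (Δ ∪ B) z)| ≤ θ₀ * sE * s := by
      rw [hθ₀def, hsEdef, hsdef]
      exact hbound (2 * u) (Δ ∪ B) z hdisjΔB_EB hcardΔB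
    have bound3 : |q A (mask (E \ B) z) (mask T z)| ≤ θ₁ * sE * t := by
      rw [hθ₁def, hsEdef, htdef]
      exact hbound k T z hdisjT_EB hT.le
    have lower_g : (1 - d2) * s ^ 2 ≤ q A (mask (Δ ∪ B) z) (mask (Δ ∪ B) z) := by
      rw [hd2def, hs2]
      exact rip_lower A (Δ ∪ B) hcardΔB z
    have lower_w : (1 - dk) * t ^ 2 ≤ q A (mask T z) (mask T z) := by
      rw [hdkdef, ht2]
      exact rip_lower A T hT.le z
    have ineqB : (1 - d2) * s ^ 2 ≤ θ₂ * s * t + θ₀ * sE * s := by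
      have e1 : |q A (mask (Δ ∪ B) z) (mask (E \ B) z)| =
          |q A (mask (E \ B) z) (mask (Δ ∪ B) z)| := by rw [q_comm]
      have := neg_abs_le (q A (mask (Δ ∪ B) z) (mask T z))
      have := neg_abs_le (q A (mask (Δ ∪ B) z) (mask (E \ B) z))
      rw [hq_g] at lower_g
      rw [e1] at this
      linarith [bound1, bound2]
    have ineqA : (1 - dk) * t ^ 2 ≤ θ₂ * s * t + θ₁ * sE * t := by
      have e1 : |q A (mask T z) (mask (Δ ∪ B) z)| =
          |q A (mask (Δ ∪ B) z) (mask T z)| := by rw [q_comm]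
      have e2 : |q A (mask T z) (mask (E \ B) z)| =
          |q A (mask (E \ B) z) (mask T z)| := by rw [q_comm]
      have n1 := neg_abs_le (q A (mask T z) (mask (Δ ∪ B) z))
      have n2 := neg_abs_le (q A (mask T z) (mask (E \ B) z))
      rw [hq_w] at lower_w
      rw [e1] at n1
      rw [e2] at n2
      linarith [bound1, bound3]
    -- sE ≤ s via cone constraint and Cauchy-Schwarz
    have hsEs : sE ≤ s := by
      have hcs : (∑ j ∈ Δ, |z j|) ^ 2 ≤ (u : ℝ) * ∑ j ∈ Δ, z j ^ 2 := by
        have hcs' := sq_sum_le_card_mul_sum_sq (s := Δ) (f := fun j => |z j|)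
        simp only [sq_abs] at hcs'
        rw [hu] at hcs'
        exact_mod_cast hcs'
      have h1 : ∑ j ∈ Δ, |z j| ≤ Real.sqrt ((u : ℝ) * ∑ j ∈ Δ, z j ^ 2) := by
        have hnn : 0 ≤ ∑ j ∈ Δ, |z j| := Finset.sum_nonneg fun j _ => abs_nonneg _
        calc ∑ j ∈ Δ, |z j| = Real.sqrt ((∑ j ∈ Δ, |z j|) ^ 2) := (Real.sqrt_sq hnn).symm
          _ ≤ Real.sqrt ((u : ℝ) * ∑ j ∈ Δ, z j ^ 2) := Real.sqrt_le_sqrt hcs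
      have h2 : Real.sqrt (∑ j ∈ Δ, z j ^ 2) ≤ s := by
        rw [hsdef]
        exact Real.sqrt_le_sqrt (Finset.sum_le_sum_of_subset_of_nonneg
          Finset.subset_union_left (fun j _ _ => sq_nonneg _))
      have hup : (0:ℝ) < Real.sqrt u := Real.sqrt_pos.mpr (by exact_mod_cast hupos)
      rw [hsEdef, div_le_iff₀ hup]
      calc ∑ j ∈ E, |z j| ≤ ∑ j ∈ Δ, |z j| := hconeE
        _ ≤ Real.sqrt ((u : ℝ) * ∑ j ∈ Δ, z j ^ 2) := h1
        _ = Real.sqrt u * Real.sqrt (∑ j ∈ Δ, z j ^ 2) := Real.sqrt_mul (by positivity) _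
        _ ≤ Real.sqrt u * s := mul_le_mul_of_nonneg_left h2 (Real.sqrt_nonneg _)
        _ = s * Real.sqrt u := mul_comm _ _
    -- constants algebra from hc1b / hc2
    have hpos2 : 0 < (1 - d2) * (1 - dk) - θ₂ ^ 2 := by
      have hprod : 0 ≤ d2 * dk := mul_nonneg hd2nn hdknn
      have hexpand2 : (1 - d2) * (1 - dk) = 1 - d2 - dk + d2 * dk := by ring
      linarith
    have hdenom : 0 < 1 - d2 - θ₂ ^ 2 / (1 - dk) := by
      have heq : 1 - d2 - θ₂ ^ 2 / (1 - dk) = ((1 - d2) * (1 - dk) - θ₂ ^ 2) / (1 - dk) := by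
        field_simp
      rw [heq]
      exact div_pos hpos2 h1k
    have hmono1 : ripConst A u ≤ d2 := ripConst_mono A (by omega)
    have hmono2 : θ₁ ≤ θ₂ := rocConst_mono_left A (by omega)
    have hdenom' : 0 < 1 - ripConst A u - θ₁ ^ 2 / (1 - dk) := by
      have hsq : θ₁ ^ 2 ≤ θ₂ ^ 2 := pow_le_pow_left₀ hθ₁nn hmono2 2
      have hdiv : θ₁ ^ 2 / (1 - dk) ≤ θ₂ ^ 2 / (1 - dk) := by
        have := mul_le_mul_of_nonneg_right hsq (inv_nonneg.mpr h1k.le)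
        simpa [div_eq_mul_inv] using this
      linarith
    have haux : 0 ≤ aConst A k u u := by
      have hnum : 0 ≤ rocConst A u u + θ₁ * θ₁ / (1 - dk) :=
        add_nonneg (rocConst_nonneg A u u)
          (div_nonneg (mul_nonneg hθ₁nn hθ₁nn) h1k.le)
      have : aConst A k u u = (rocConst A u u + θ₁ * θ₁ / (1 - dk)) /
          (1 - ripConst A u - θ₁ ^ 2 / (1 - dk)) := rfl
      rw [this]
      exact div_nonneg hnum hdenom'.le
    have ha2u : aConst A k (2 * u) u < 1 := by linarith
    have hND : θ₀ + θ₁ * θ₂ / (1 - dk) < 1 - d2 - θ₂ ^ 2 / (1 - dk) := by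
      have heq : aConst A k (2 * u) u = (θ₀ + θ₁ * θ₂ / (1 - dk)) /
          (1 - d2 - θ₂ ^ 2 / (1 - dk)) := rfl
      rw [heq] at ha2u
      exact (div_lt_one hdenom).mp ha2u
    have hNDmul : θ₀ * (1 - dk) + θ₁ * θ₂ < (1 - d2) * (1 - dk) - θ₂ ^ 2 := by
      have e1 : θ₁ * θ₂ / (1 - dk) * (1 - dk) = θ₁ * θ₂ := div_mul_cancel₀ _ (ne_of_gt h1k)
      have e2 : θ₂ ^ 2 / (1 - dk) * (1 - dk) = θ₂ ^ 2 := div_mul_cancel₀ _ (ne_of_gt h1k)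
      linarith [e1, e2, mul_lt_mul_of_pos_right hND h1k]
    -- conclude s = 0
    have hAt : (1 - dk) * t ≤ θ₂ * s + θ₁ * sE := by
      rcases eq_or_lt_of_le ht0 with h' | h'
      · rw [← h', mul_zero]
        exact add_nonneg (mul_nonneg hθ₂nn hs0) (mul_nonneg hθ₁nn hsE0)
      · have hmul : ((1 - dk) * t) * t ≤ (θ₂ * s + θ₁ * sE) * t := by linarith [ineqA]
        exact le_of_mul_le_mul_right hmul h'
    have hszero : s = 0 := by
      by_contra hs'
      have hspos : 0 < s := lt_of_le_of_ne hs0 (Ne.symm hs')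
      have step1 : θ₂ * s * ((1 - dk) * t) ≤ θ₂ * s * (θ₂ * s + θ₁ * sE) :=
        mul_le_mul_of_nonneg_left hAt (mul_nonneg hθ₂nn hs0)
      have step2 : (1 - d2) * s ^ 2 * (1 - dk) ≤ (θ₂ * s * t + θ₀ * sE * s) * (1 - dk) :=
        mul_le_mul_of_nonneg_right ineqB h1k.le
      have hsEs' : sE * s ≤ s * s := mul_le_mul_of_nonneg_right hsEs hs0
      have c3 : (θ₂ ^ 2 + θ₁ * θ₂ + θ₀ * (1 - dk)) * s ^ 2 < (1 - d2) * (1 - dk) * s ^ 2 := by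
        have hcoef : θ₂ ^ 2 + θ₁ * θ₂ + θ₀ * (1 - dk) < (1 - d2) * (1 - dk) := by linarith
        have hs2pos : (0:ℝ) < s ^ 2 := by positivity
        linarith [mul_lt_mul_of_pos_right hcoef hs2pos]
      have hp1 : θ₁ * θ₂ * (sE * s) ≤ θ₁ * θ₂ * (s * s) :=
        mul_le_mul_of_nonneg_left hsEs' (mul_nonneg hθ₁nn hθ₂nn)
      have hp2 : θ₀ * (1 - dk) * (sE * s) ≤ θ₀ * (1 - dk) * (s * s) :=
        mul_le_mul_of_nonneg_left hsEs' (mul_nonneg hθ₀nn h1k.le)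
      linarith [step1, step2, hp1, hp2, c3]
    -- z vanishes on Δ ∪ B hence on all of Tᶜ
    have hsum0 : ∑ j ∈ Δ ∪ B, z j ^ 2 = 0 := by
      rw [← hs2, hszero]
      ring
    have hzΔB : ∀ j ∈ Δ ∪ B, z j = 0 := by
      intro j hj
      have := (Finset.sum_eq_zero_iff_of_nonneg fun i _ => sq_nonneg (z i)).mp hsum0 j hj
      exact pow_eq_zero_iff two_ne_zero |>.mp this
    have hΔ0 : ∑ j ∈ Δ, |z j| = 0 :=
      Finset.sum_eq_zero fun j hj => by
        rw [hzΔB j (Finset.mem_union_left B hj), abs_zero]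
    have hE0 : ∀ j ∈ E, z j = 0 := by
      intro j hj
      have hle : ∑ i ∈ E, |z i| ≤ 0 := by rw [hΔ0] at hconeE; exact hconeE
      have hnn : ∀ i ∈ E, (0:ℝ) ≤ |z i| := fun i _ => abs_nonneg _
      have := Finset.sum_eq_zero_iff_of_nonneg hnn |>.mp
        (le_antisymm hle (Finset.sum_nonneg hnn))
      exact abs_eq_zero.mp (this j hj)
    apply hfinal
    intro j hj
    rw [← hTc_eq] at hj
    rcases Finset.mem_union.mp hj with hj' | hj'
    · exact hzΔB j (Finset.mem_union_left B hj')
    · exact hE0 j hj'
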